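/- arXiv:1401.6659 — 2 statements merged into one kernel-verified Lean document; each statement's English description precedes it below -/
import Mathlib

section
/- Let S be a set of positive integers with positive Banach density δ(S) > 0. Then there exist a positive integer k with k < 2/δ(S) and a subset Q ⊆ S such that: (a) the Banach density of Q satisfies δ(Q) ≥ δ(S)³/24; and (b) for all a ∈ Q, we have a + k ∈ S. -/
open Filter Set

/-- The Banach (upper) density of a set of natural numbers: the `limsup`, as the interval
length `n` tends to infinity, of the largest proportion `|S ∩ I| / |I|` over
intervals `I` of natural numbers of length `n`. -/
noncomputable def banachDensity (S : Set ℕ) : ℝ :=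
  Filter.limsup (fun n : ℕ => ⨆ a : ℕ, ((S ∩ Set.Ico a (a + n)).ncard : ℝ) / n) Filter.atTop

private lemma bd_ncard_le (T : Set ℕ) (a n : ℕ) : (T ∩ Set.Ico a (a + n)).ncard ≤ n := by
  calc (T ∩ Set.Ico a (a + n)).ncard ≤ (Set.Ico a (a + n)).ncard :=
        Set.ncard_le_ncard Set.inter_subset_right (Set.finite_Ico _ _)
    _ = n := by
        rw [← Finset.coe_Ico, Set.ncard_coe_finset, Nat.card_Ico]
        omega

private lemma bd_term_le_one (T : Set ℕ) (a n : ℕ) :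
    ((T ∩ Set.Ico a (a + n)).ncard : ℝ) / n ≤ 1 := by
  rcases Nat.eq_zero_or_pos n with h | h
  · simp [h]
  · rw [div_le_one (by positivity)]
    exact_mod_cast bd_ncard_le T a n

private lemma bd_term_nonneg (T : Set ℕ) (a n : ℕ) :
    0 ≤ ((T ∩ Set.Ico a (a + n)).ncard : ℝ) / n := by positivity

private lemma bd_bdd (T : Set ℕ) (n : ℕ) :
    BddAbove (Set.range fun a : ℕ => ((T ∩ Set.Ico a (a + n)).ncard : ℝ) / n) :=
  ⟨1, by rintro x ⟨a, rfl⟩; exact bd_term_le_one T a n⟩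

private lemma bd_f_le_one (T : Set ℕ) (n : ℕ) :
    (⨆ a : ℕ, ((T ∩ Set.Ico a (a + n)).ncard : ℝ) / n) ≤ 1 :=
  ciSup_le fun a => bd_term_le_one T a n

private lemma bd_f_nonneg (T : Set ℕ) (n : ℕ) :
    0 ≤ ⨆ a : ℕ, ((T ∩ Set.Ico a (a + n)).ncard : ℝ) / n :=
  le_trans (bd_term_nonneg T 0 n) (le_ciSup (bd_bdd T n) 0)

private lemma bd_le_one (T : Set ℕ) : banachDensity T ≤ 1 := by
  apply Filter.limsup_le_of_le
  · exact Filter.isCoboundedUnder_le_of_le (f := fun n : ℕ => ⨆ a : ℕ, ((T ∩ Set.Ico a (a + n)).ncard : ℝ) / n) Filter.atTop fun n => bd_f_nonneg T n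
  · exact Filter.Eventually.of_forall fun n => bd_f_le_one T n

private lemma bd_ge (T : Set ℕ) {c : ℝ}
    (h : ∃ᶠ n in Filter.atTop, c ≤ ⨆ a : ℕ, ((T ∩ Set.Ico a (a + n)).ncard : ℝ) / n) :
    c ≤ banachDensity T :=
  Filter.le_limsup_of_frequently_le h (Filter.isBoundedUnder_of ⟨1, fun n => bd_f_le_one T n⟩)

set_option maxHeartbeats 1000000 in
theorem stmt_2 (S : Set ℕ) (hpos : ∀ n ∈ S, 0 < n) (hδ : 0 < banachDensity S) :
    ∃ (k : ℕ) (Q : Set ℕ), 0 < k ∧ (k : ℝ) < 2 / banachDensity S ∧ Q ⊆ S ∧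
      banachDensity Q ≥ banachDensity S ^ 3 / 24 ∧
      ∀ a ∈ Q, a + k ∈ S := by
  set δ := banachDensity S with hδdef
  have hδ1 : δ ≤ 1 := bd_le_one S
  -- K : the bound on k
  set K : ℕ := ⌈(2 : ℝ) / δ⌉₊ - 1 with hK
  have h2δ : (2 : ℝ) ≤ 2 / δ := by
    rw [le_div_iff₀ hδ]; nlinarith
  have hceil2 : 2 ≤ ⌈(2 : ℝ) / δ⌉₊ := by
    have h := (Nat.le_ceil ((2:ℝ)/δ))
    have : (2:ℝ) ≤ (⌈(2 : ℝ) / δ⌉₊ : ℝ) := le_trans h2δ h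
    exact_mod_cast this
  have hK1 : 1 ≤ K := by omega
  have hKlt : (K : ℝ) < 2 / δ := by
    have h1 : (⌈(2 : ℝ) / δ⌉₊ : ℝ) < 2 / δ + 1 := Nat.ceil_lt_add_one (by positivity)
    have h2 : (K : ℝ) = (⌈(2 : ℝ) / δ⌉₊ : ℝ) - 1 := by
      rw [hK]; push_cast [Nat.cast_sub (by omega : 1 ≤ ⌈(2 : ℝ) / δ⌉₊)]; ring
    linarith
  have hK1le : (2 : ℝ) / δ ≤ (K : ℝ) + 1 := by
    have : (K : ℝ) + 1 = (⌈(2 : ℝ) / δ⌉₊ : ℝ) := by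
      rw [hK]; push_cast [Nat.cast_sub (by omega : 1 ≤ ⌈(2 : ℝ) / δ⌉₊)]; ring
    rw [this]; exact Nat.le_ceil _
  -- the candidate sets
  set Q : ℕ → Set ℕ := fun k => {x ∈ S | x + k ∈ S} with hQ
  -- combinatorial core: in any window, S-count is controlled by Q-counts
  have comb : ∀ a n : ℕ,
      (S ∩ Set.Ico a (a + n)).ncard ≤ n / (K + 1) + 1 +
        ∑ k ∈ Finset.Icc 1 K, (Q k ∩ Set.Ico a (a + n)).ncard := by
    intro a n
    set T := S ∩ Set.Ico a (a + n) with hT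
    have hTfin : T.Finite := (Set.finite_Ico a (a+n)).subset Set.inter_subset_right
    set B : Set ℕ := {x ∈ T | ∀ k ∈ Finset.Icc 1 K, x + k ∉ T} with hB
    have hBfin : B.Finite := hTfin.subset (Set.sep_subset _ _)
    -- bound on B
    have hBsep : ∀ x ∈ B, ∀ y ∈ B, x < y → x + K + 1 ≤ y := by
      intro x hx y hy hxy
      by_contra hcon
      have hk : y - x ∈ Finset.Icc 1 K := by
        simp only [Finset.mem_Icc]; omega
      have hmem : x + (y - x) ∈ T := by
        have hxy2 : x + (y - x) = y := by omega
        rw [hxy2]; exact hy.1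
      exact hx.2 (y - x) hk hmem
    have hBcard : B.ncard ≤ n / (K+1) + 1 := by
      have hinj : Set.InjOn (fun x => (x - a) / (K+1)) B := by
        intro x hx y hy hxy
        dsimp only at hxy
        by_contra hne
        rcases Nat.lt_or_ge x y with h | h
        · have h1 := hBsep x hx y hy h
          have hax : a ≤ x := hx.1.2.1
          have : (x - a) / (K+1) + 1 ≤ (y - a) / (K+1) := by
            have h2 : (x - a) + (K+1) ≤ y - a := by omega
            calc (x - a) / (K+1) + 1 = ((x - a) + (K+1)) / (K+1) := by
                  rw [Nat.add_div_right _ (by omega)]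
              _ ≤ (y - a) / (K+1) := Nat.div_le_div_right h2
          omega
        · rcases Nat.lt_or_ge y x with h' | h'
          · have h1 := hBsep y hy x hx h'
            have hay : a ≤ y := hy.1.2.1
            have : (y - a) / (K+1) + 1 ≤ (x - a) / (K+1) := by
              have h2 : (y - a) + (K+1) ≤ x - a := by omega
              calc (y - a) / (K+1) + 1 = ((y - a) + (K+1)) / (K+1) := by
                    rw [Nat.add_div_right _ (by omega)]
                _ ≤ (x - a) / (K+1) := Nat.div_le_div_right h2
            omega
          · omega
      have himg : (fun x => (x - a) / (K+1)) '' B ⊆ Set.Iic (n / (K+1)) := by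
        rintro _ ⟨x, hx, rfl⟩
        have : x - a ≤ n := by
          have := hx.1.2.2
          omega
        exact Nat.div_le_div_right this
      calc B.ncard = ((fun x => (x - a) / (K+1)) '' B).ncard :=
            (Set.ncard_image_of_injOn hinj).symm
        _ ≤ (Set.Iic (n / (K+1))).ncard :=
            Set.ncard_le_ncard himg (Set.finite_Iic _)
        _ = n / (K+1) + 1 := by
            rw [← Finset.coe_Iic, Set.ncard_coe_finset, Nat.card_Iic]
    -- cover
    have hUfin : ∀ k ∈ Finset.Icc 1 K, (Q k ∩ Set.Ico a (a + n)).Finite := fun k _ =>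
      (Set.finite_Ico a (a+n)).subset Set.inter_subset_right
    have hbigfin : (⋃ k ∈ Finset.Icc 1 K, (Q k ∩ Set.Ico a (a + n))).Finite :=
      Set.Finite.biUnion (Finset.Icc 1 K).finite_toSet hUfin
    have hcover : T ⊆ B ∪ ⋃ k ∈ Finset.Icc 1 K, (Q k ∩ Set.Ico a (a + n)) := by
      intro x hx
      by_cases hxB : ∀ k ∈ Finset.Icc 1 K, x + k ∉ T
      · exact Or.inl ⟨hx, hxB⟩
      · push_neg at hxB
        obtain ⟨k, hk, hkT⟩ := hxB
        refine Or.inr (Set.mem_biUnion hk ⟨⟨hx.1, hkT.1⟩, hx.2⟩)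
    calc T.ncard ≤ (B ∪ ⋃ k ∈ Finset.Icc 1 K, (Q k ∩ Set.Ico a (a + n))).ncard :=
          Set.ncard_le_ncard hcover (hBfin.union hbigfin)
      _ ≤ B.ncard + (⋃ k ∈ Finset.Icc 1 K, (Q k ∩ Set.Ico a (a + n))).ncard :=
          Set.ncard_union_le _ _
      _ ≤ n / (K+1) + 1 + ∑ k ∈ Finset.Icc 1 K, (Q k ∩ Set.Ico a (a + n)).ncard := by
          refine add_le_add hBcard ?_
          classical
          induction (Finset.Icc 1 K) using Finset.induction with
          | empty => simp
          | @insert b s hbs ih =>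
            rw [Finset.set_biUnion_insert, Finset.sum_insert hbs]
            exact le_trans (Set.ncard_union_le _ _)
              (add_le_add le_rfl ih)
  -- frequently, some window is dense
  have hfreq : ∃ᶠ n in Filter.atTop,
      δ - δ/12 < ⨆ a : ℕ, ((S ∩ Set.Ico a (a + n)).ncard : ℝ) / n :=
    Filter.frequently_lt_of_lt_limsup
      (Filter.isCoboundedUnder_le_of_le
        (f := fun n : ℕ => ⨆ a : ℕ, ((S ∩ Set.Ico a (a + n)).ncard : ℝ) / n)
        Filter.atTop fun n => bd_f_nonneg S n)
      (show δ - δ/12 < banachDensity S by rw [← hδdef]; linarith)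
  set N : ℕ := max 1 ⌈(3:ℝ)/δ⌉₊ with hN
  have hfreq3 : ∃ᶠ n in Filter.atTop, ∃ k ∈ Finset.Icc 1 K,
      δ^3/24 ≤ ⨆ a : ℕ, ((Q k ∩ Set.Ico a (a + n)).ncard : ℝ) / n := by
    refine (hfreq.and_eventually (Filter.eventually_ge_atTop N)).mono ?_
    rintro n ⟨hlt, hnN⟩
    have hn1 : 1 ≤ n := le_trans (le_max_left _ _) hnN
    have hn0 : (0:ℝ) < n := by exact_mod_cast hn1
    have hn3δ : (3:ℝ)/δ ≤ n := by
      have h1 := Nat.le_ceil ((3:ℝ)/δ)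
      have h2 : (⌈(3:ℝ)/δ⌉₊ : ℝ) ≤ n := by
        exact_mod_cast le_trans (le_max_right 1 _) hnN
      linarith
    have h3 : (3:ℝ) ≤ n * δ := by
      rw [div_le_iff₀ hδ] at hn3δ; linarith
    obtain ⟨a, ha⟩ := exists_lt_of_lt_ciSup hlt
    set m := (S ∩ Set.Ico a (a + n)).ncard with hm
    have hma : (δ - δ/12) * n < m := by
      rw [← lt_div_iff₀ hn0]; exact ha
    have hcast : (m:ℝ) ≤ ((n / (K+1) : ℕ) : ℝ) + 1 +
        ∑ k ∈ Finset.Icc 1 K, ((Q k ∩ Set.Ico a (a + n)).ncard : ℝ) := by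
      exact_mod_cast comb a n
    have hdiv : ((n / (K+1) : ℕ) : ℝ) ≤ n * δ / 2 := by
      calc ((n / (K+1) : ℕ) : ℝ) ≤ (n:ℝ) / (((K+1) : ℕ) : ℝ) := Nat.cast_div_le
        _ = (n:ℝ) / ((K:ℝ)+1) := by push_cast; ring_nf
        _ ≤ (n:ℝ) / (2/δ) := by
            apply div_le_div_of_nonneg_left (le_of_lt hn0) (by positivity) hK1le
        _ = n * δ / 2 := by
            rw [div_div_eq_mul_div]
    have hsum : (5*δ/12) * n - 1 ≤
        ∑ k ∈ Finset.Icc 1 K, ((Q k ∩ Set.Ico a (a + n)).ncard : ℝ) := by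
      nlinarith [hma, hcast, hdiv]
    have hcardIcc : (Finset.Icc 1 K).card = K := by rw [Nat.card_Icc]; omega
    have hK0 : (0:ℝ) < K := by exact_mod_cast hK1
    have hpig : ∃ k ∈ Finset.Icc 1 K,
        ((5*δ/12) * n - 1) / K ≤ ((Q k ∩ Set.Ico a (a + n)).ncard : ℝ) := by
      apply Finset.exists_le_of_sum_le ⟨1, Finset.mem_Icc.mpr (by omega)⟩
      have heq : ∑ _k ∈ Finset.Icc 1 K, (((5*δ/12) * n - 1) / (K:ℝ)) = (5*δ/12) * n - 1 := by
        rw [Finset.sum_const, hcardIcc, nsmul_eq_mul]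
        field_simp
      rw [heq]
      exact hsum
    obtain ⟨k, hk, hck⟩ := hpig
    refine ⟨k, hk, ?_⟩
    have hR0 : (0:ℝ) ≤ (5*δ/12) * n - 1 := by nlinarith [h3, hδ]
    have hinv : δ/2 ≤ 1/(K:ℝ) := by
      rw [div_le_div_iff₀ (by norm_num) hK0]
      have hc : (2/δ) * δ = 2 := div_mul_cancel₀ 2 (ne_of_gt hδ)
      nlinarith [mul_lt_mul_of_pos_right hKlt hδ]
    have hRK : ((5*δ/12) * n - 1) * (δ/2) ≤ ((5*δ/12) * n - 1) / (K:ℝ) := by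
      have heq2 : ((5*δ/12) * n - 1) / (K:ℝ) = ((5*δ/12) * n - 1) * (1/(K:ℝ)) := by ring
      rw [heq2]
      exact mul_le_mul_of_nonneg_left hinv hR0
    have hfinal : δ^3/24 ≤ ((Q k ∩ Set.Ico a (a + n)).ncard : ℝ) / n := by
      rw [le_div_iff₀ hn0]
      have hstep : δ^3/24 * n ≤ ((5*δ/12) * n - 1) * (δ/2) := by
        nlinarith [mul_nonneg (sub_nonneg.mpr hδ1) (mul_nonneg (mul_nonneg hδ.le hδ.le) hn0.le),
          mul_nonneg (sub_nonneg.mpr h3) hδ.le, hδ, hn0]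
      linarith [hstep, hRK, hck]
    exact le_trans hfinal (le_ciSup (bd_bdd (Q k) n) a)
  -- extract a single k that works frequently
  have hfin : ∃ k ∈ Finset.Icc 1 K, ∃ᶠ n in Filter.atTop,
      δ^3/24 ≤ ⨆ a : ℕ, ((Q k ∩ Set.Ico a (a + n)).ncard : ℝ) / n := by
    by_contra hcon
    push_neg at hcon
    have hev : ∀ᶠ n in Filter.atTop, ∀ k ∈ Finset.Icc 1 K,
        ¬ (δ^3/24 ≤ ⨆ a : ℕ, ((Q k ∩ Set.Ico a (a + n)).ncard : ℝ) / n) := by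
      rw [Filter.eventually_all_finset]
      intro k hk
      exact Filter.not_frequently.mp (by simpa using hcon k hk)
    obtain ⟨n, ⟨k, hk, hle⟩, hall⟩ := (hfreq3.and_eventually hev).exists
    exact hall k hk hle
  obtain ⟨k, hk, hfreqk⟩ := hfin
  simp only [Finset.mem_Icc] at hk
  refine ⟨k, Q k, by omega, ?_, fun x hx => hx.1, ?_, fun x hx => hx.2⟩
  · have : (k:ℝ) ≤ (K:ℝ) := by exact_mod_cast hk.2
    linarith
  · exact bd_ge (Q k) hfreqk
end

section
/- Let X be a Noetherian topological space, let f : X → X be a continuous map, let x ∈ X, let (x₋ₙ)_{n ≥ 0} be a coherent backward orbit of x with respect to f, and let Y ⊆ X be a closed subset. Then the set S = { n ∈ ℕ : x₋ₙ ∈ Y } is a union of at most finitely many arithmetic progressions together with a set of Banach density zero. -/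
open Filter Set Topology

namespace BDaux

noncomputable def rat (S : Set ℕ) (n : ℕ) : ℝ :=
  ⨆ a : ℕ, ((S ∩ Set.Ico a (a + n)).ncard : ℝ) / n

lemma window_finite (S : Set ℕ) (a n : ℕ) : (S ∩ Set.Ico a (a + n)).Finite :=
  (Set.finite_Ico a (a + n)).inter_of_right S

lemma window_card_le (S : Set ℕ) (a n : ℕ) : (S ∩ Set.Ico a (a + n)).ncard ≤ n := by
  have h := Set.ncard_le_ncard (inter_subset_right (s := S) (t := Set.Ico a (a + n)))
    (Set.finite_Ico a (a + n))
  have : (Set.Ico a (a + n)).ncard = n := by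
    rw [show Set.Ico a (a + n) = ↑(Finset.Ico a (a + n)) by simp, Set.ncard_coe_finset]
    simp
  omega

lemma term_nonneg (S : Set ℕ) (a n : ℕ) : 0 ≤ ((S ∩ Set.Ico a (a + n)).ncard : ℝ) / n := by
  positivity

lemma term_le_one (S : Set ℕ) (a n : ℕ) : ((S ∩ Set.Ico a (a + n)).ncard : ℝ) / n ≤ 1 := by
  rcases Nat.eq_zero_or_pos n with h | h
  · simp [h]
  · rw [div_le_one (by positivity)]
    exact_mod_cast window_card_le S a n

lemma bdd (S : Set ℕ) (n : ℕ) :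
    BddAbove (Set.range fun a => ((S ∩ Set.Ico a (a + n)).ncard : ℝ) / n) :=
  ⟨1, by rintro x ⟨a, rfl⟩; exact term_le_one S a n⟩

lemma rat_nonneg (S : Set ℕ) (n : ℕ) : 0 ≤ rat S n :=
  Real.iSup_nonneg (term_nonneg S · n)

lemma rat_le_one (S : Set ℕ) (n : ℕ) : rat S n ≤ 1 :=
  Real.iSup_le (term_le_one S · n) zero_le_one

lemma div_mono_num {x y : ℝ} (h : x ≤ y) (n : ℕ) : x / n ≤ y / n := by
  rw [div_eq_mul_inv, div_eq_mul_inv]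
  exact mul_le_mul_of_nonneg_right h (by positivity)

lemma rat_mono {A B : Set ℕ} (h : A ⊆ B) (n : ℕ) : rat A n ≤ rat B n := by
  refine Real.iSup_le (fun a => ?_) (rat_nonneg B n)
  refine le_trans ?_ (le_ciSup (bdd B n) a)
  have hc : (A ∩ Set.Ico a (a + n)).ncard ≤ (B ∩ Set.Ico a (a + n)).ncard :=
    Set.ncard_le_ncard (inter_subset_inter_left _ h) (window_finite B a n)
  exact div_mono_num (by exact_mod_cast hc) n

lemma rat_union_le (A B : Set ℕ) (n : ℕ) : rat (A ∪ B) n ≤ rat A n + rat B n := by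
  refine Real.iSup_le (fun a => ?_) (add_nonneg (rat_nonneg A n) (rat_nonneg B n))
  have hcard : ((A ∪ B) ∩ Set.Ico a (a + n)).ncard ≤
      (A ∩ Set.Ico a (a + n)).ncard + (B ∩ Set.Ico a (a + n)).ncard := by
    rw [Set.union_inter_distrib_right]
    exact Set.ncard_union_le _ _
  have h1 : ((A ∪ B) ∩ Set.Ico a (a + n)).ncard / (n : ℝ) ≤
      ((A ∩ Set.Ico a (a + n)).ncard + (B ∩ Set.Ico a (a + n)).ncard : ℝ) / n :=
    div_mono_num (by exact_mod_cast hcard) n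
  refine h1.trans ?_
  rw [add_div]
  exact add_le_add (le_ciSup (bdd A n) a) (le_ciSup (bdd B n) a)

def Dnull (S : Set ℕ) : Prop := Tendsto (rat S) atTop (nhds 0)

lemma Dnull_mono {A B : Set ℕ} (h : A ⊆ B) (hB : Dnull B) : Dnull A :=
  squeeze_zero (fun n => rat_nonneg A n) (fun n => rat_mono h n) hB

lemma Dnull_union {A B : Set ℕ} (hA : Dnull A) (hB : Dnull B) : Dnull (A ∪ B) := by
  have := hA.add hB
  rw [add_zero] at this
  exact squeeze_zero (fun n => rat_nonneg _ n) (fun n => rat_union_le A B n) this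


lemma Dnull_finite {S : Set ℕ} (hS : S.Finite) : Dnull S := by
  have hb : ∀ n : ℕ, rat S n ≤ (S.ncard : ℝ) / n := by
    intro n
    refine Real.iSup_le (fun a => ?_) (by positivity)
    exact div_mono_num (by exact_mod_cast Set.ncard_le_ncard inter_subset_left hS) n
  refine squeeze_zero (fun n => rat_nonneg S n) hb ?_
  simpa using Filter.Tendsto.div_atTop (tendsto_const_nhds (x := (S.ncard : ℝ)))
    tendsto_natCast_atTop_atTop

lemma Dnull_biUnion {ι : Type*} (F : Finset ι) {A : ι → Set ℕ}
    (h : ∀ i ∈ F, Dnull (A i)) : Dnull (⋃ i ∈ F, A i) := by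
  classical
  induction F using Finset.induction_on with
  | empty => simpa using Dnull_finite Set.finite_empty
  | @insert a s hx ih =>
    rw [Finset.set_biUnion_insert]
    exact Dnull_union (h a (Finset.mem_insert_self a s))
      (ih fun i hi => h i (Finset.mem_insert_of_mem hi))

lemma banachDensity_eq_zero {S : Set ℕ} (h : Dnull S) : banachDensity S = 0 :=
  h.limsup_eq

end BDaux

namespace BDaux

def Dpos (S : Set ℕ) : Prop := ¬ Dnull S

lemma dpos_frequently {S : Set ℕ} (h : Dpos S) : ∃ ε > 0, ∃ᶠ n in atTop, ε ≤ rat S n := by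
  by_contra h'
  push_neg at h'
  refine h (Metric.tendsto_atTop.mpr fun ε hε => ?_)
  have := h' ε hε
  rw [Filter.eventually_atTop] at this
  obtain ⟨N, hN⟩ := this
  refine ⟨N, fun n hn => ?_⟩
  have h1 := hN n hn
  rw [Real.dist_eq, sub_zero, abs_of_nonneg (rat_nonneg S n)]
  exact h1

lemma rat_le_rat_shift (A : Set ℕ) (d n : ℕ) : rat A n ≤ rat ((· + d) '' A) n := by
  refine Real.iSup_le (fun a => ?_) (rat_nonneg _ n)
  have key : ((· + d) '' A) ∩ Set.Ico (a + d) (a + d + n) = (· + d) '' (A ∩ Set.Ico a (a + n)) := by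
    ext m
    simp only [Set.mem_inter_iff, Set.mem_image, Set.mem_Ico]
    constructor
    · rintro ⟨⟨x, hx, rfl⟩, h1, h2⟩
      exact ⟨x, ⟨hx, by omega⟩, rfl⟩
    · rintro ⟨x, ⟨hx, h1, h2⟩, rfl⟩
      exact ⟨⟨x, hx, rfl⟩, by omega⟩
  have hcard : (A ∩ Set.Ico a (a + n)).ncard = (((· + d) '' A) ∩ Set.Ico (a + d) (a + d + n)).ncard := by
    rw [key, Set.ncard_image_of_injective _ (add_left_injective d)]
  calc ((A ∩ Set.Ico a (a + n)).ncard : ℝ) / n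
      = ((((· + d) '' A) ∩ Set.Ico (a + d) ((a + d) + n)).ncard : ℝ) / n := by
        rw [hcard]
    _ ≤ _ := le_ciSup (bdd _ n) (a + d)

lemma Dpos_shift {A : Set ℕ} (d : ℕ) (h : Dpos A) : Dpos ((· + d) '' A) := by
  intro hnull
  exact h (squeeze_zero (fun n => rat_nonneg A n) (fun n => rat_le_rat_shift A d n) hnull)

lemma ceil_mul_ge (x d : ℕ) (hd : 1 ≤ d) : x ≤ d * ((x + d - 1) / d) := by
  have h1 := Nat.div_add_mod (x + d - 1) d
  have h2 : (x + d - 1) % d < d := Nat.mod_lt _ (by omega)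
  omega

lemma Dnull_affine {A : Set ℕ} (a0 d : ℕ) (hd : 1 ≤ d) (hA : Dnull A) :
    Dnull ((fun j => a0 + d * j) '' A) := by
  set B := (fun j => a0 + d * j) '' A with hB
  have hinj : Function.Injective (fun j => a0 + d * j) := by
    intro x y hxy
    simp only at hxy
    exact Nat.eq_of_mul_eq_mul_left (lt_of_lt_of_le zero_lt_one hd) (Nat.add_left_cancel hxy)
  have key : ∀ n, 1 ≤ n → rat B n ≤ 2 * rat A (n / d + 1) := by
    intro n hn
    refine Real.iSup_le (fun a => ?_) (by
      have := rat_nonneg A (n / d + 1); positivity)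
    set m := n / d + 1 with hm
    set j₀ := (a - a0 + d - 1) / d with hj₀
    have hsub : B ∩ Set.Ico a (a + n) ⊆ (fun j => a0 + d * j) '' (A ∩ Set.Ico j₀ (j₀ + m)) := by
      rintro x ⟨⟨j, hj, rfl⟩, h1, h2⟩
      dsimp only at h1 h2 ⊢
      refine ⟨j, ⟨hj, ?_, ?_⟩, rfl⟩
      · -- j₀ ≤ j
        rw [hj₀, Nat.div_le_iff_le_mul_add_pred (by omega)]
        omega
      · -- j < j₀ + m
        have hc : a - a0 ≤ d * j₀ := by
          rw [hj₀]; exact ceil_mul_ge (a - a0) d hd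
        have hdj : d * (j - j₀) < n := by
          rcases le_or_gt j₀ j with hcase | hcase
          · have e1 : d * j₀ + d * (j - j₀) = d * j := by
              rw [← Nat.mul_add]
              congr 1
              omega
            omega
          · have e0 : j - j₀ = 0 := by omega
            rw [e0]
            omega
        have : j - j₀ ≤ n / d := by
          rw [Nat.le_div_iff_mul_le (by omega : 0 < d)]
          calc (j - j₀) * d = d * (j - j₀) := Nat.mul_comm _ _
            _ ≤ n := hdj.le
        omega
    have hcard : (B ∩ Set.Ico a (a + n)).ncard ≤ (A ∩ Set.Ico j₀ (j₀ + m)).ncard := by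
      refine le_trans (Set.ncard_le_ncard hsub ((window_finite A j₀ m).image _)) ?_
      rw [Set.ncard_image_of_injective _ hinj]
    have hAm : ((A ∩ Set.Ico j₀ (j₀ + m)).ncard : ℝ) ≤ rat A m * m := by
      have h1 : ((A ∩ Set.Ico j₀ (j₀ + m)).ncard : ℝ) / m ≤ rat A m := le_ciSup (bdd A m) j₀
      have hm0 : (0 : ℝ) < m := by positivity
      calc ((A ∩ Set.Ico j₀ (j₀ + m)).ncard : ℝ)
          = ((A ∩ Set.Ico j₀ (j₀ + m)).ncard : ℝ) / m * m := by field_simp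
        _ ≤ rat A m * m := by
            exact mul_le_mul_of_nonneg_right h1 (le_of_lt hm0)
    have hmn : (m : ℝ) ≤ 2 * n := by
      have h1 : n / d ≤ n := Nat.div_le_self n d
      have : m ≤ 2 * n := by omega
      exact_mod_cast this
    calc ((B ∩ Set.Ico a (a + n)).ncard : ℝ) / n
        ≤ (rat A m * m) / n := by
          refine div_mono_num (le_trans ?_ hAm) n
          exact_mod_cast hcard
      _ ≤ (rat A m * (2 * n)) / n := by
          refine div_mono_num ?_ n
          exact mul_le_mul_of_nonneg_left hmn (rat_nonneg A m)
      _ = 2 * rat A m := by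
          have hn0 : (n : ℝ) ≠ 0 := by positivity
          field_simp
  have htend : Tendsto (fun n : ℕ => 2 * rat A (n / d + 1)) atTop (nhds 0) := by
    have h1 : Tendsto (fun n : ℕ => n / d + 1) atTop atTop := by
      refine tendsto_atTop_atTop.mpr fun b => ⟨d * b, fun n hn => ?_⟩
      have : b ≤ n / d := by
        rw [Nat.le_div_iff_mul_le (by omega : 0 < d)]
        calc b * d = d * b := Nat.mul_comm _ _
          _ ≤ n := hn
      omega
    have := (hA.comp h1).const_mul (2 : ℝ)
    simpa using this
  refine squeeze_zero' (Eventually.of_forall fun n => rat_nonneg B n) ?_ htend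
  filter_upwards [eventually_ge_atTop 1] with n hn
  exact key n hn

lemma gaps {S : Set ℕ} (h : Dpos S) : ∃ d, 1 ≤ d ∧ Dpos {m | m ∈ S ∧ m + d ∈ S} := by
  obtain ⟨ε, hε, hfreq⟩ := dpos_frequently h
  set B := ⌈(4 : ℝ) / ε⌉₊ with hBdef
  have hB1 : 1 ≤ B := Nat.one_le_iff_ne_zero.mpr (by
    have : (0 : ℝ) < 4 / ε := by positivity
    exact Nat.pos_iff_ne_zero.mp (Nat.ceil_pos.mpr this))
  have hBge : (4 : ℝ) / ε ≤ B := Nat.le_ceil _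
  by_contra hcon
  push_neg at hcon
  have hall : ∀ d ∈ Finset.Icc 1 B, Dnull {m | m ∈ S ∧ m + d ∈ S} := by
    intro d hd
    rw [Finset.mem_Icc] at hd
    by_contra hd'
    exact (hcon d hd.1) hd'
  have hTnull : Dnull (⋃ d ∈ Finset.Icc 1 B, {m | m ∈ S ∧ m + d ∈ S}) := Dnull_biUnion _ hall
  set T := ⋃ d ∈ Finset.Icc 1 B, {m | m ∈ S ∧ m + d ∈ S} with hTdef
  -- key counting: for n ≥ 1, rat S n ≤ rat T n + 1/B + 1/n
  have key : ∀ n, 1 ≤ n → rat S n ≤ rat T n + 1 / B + 1 / n := by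
    intro n hn
    refine Real.iSup_le (fun a => ?_) (by
      have := rat_nonneg T n
      positivity)
    set U := (S ∩ Set.Ico a (a + n)) \ T with hU
    have hUcard : U.ncard ≤ n / B + 1 := by
      have hmaps : ∀ m ∈ U, (m - a) / B ∈ Set.Iio (n / B + 1) := by
        rintro m ⟨⟨hmS, hm1, hm2⟩, hmT⟩
        simp only [Set.mem_Iio]
        have h1 : (m - a) / B ≤ n / B := Nat.div_le_div_right (by omega)
        omega
      have hinj : Set.InjOn (fun m => (m - a) / B) U := by
        rintro m hm m' hm' hfm
        obtain ⟨⟨hmS, hm1, hm2⟩, hmT⟩ := hm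
        obtain ⟨⟨hm'S, hm'1, hm'2⟩, hm'T⟩ := hm'
        by_contra hne
        -- wlog m < m'
        rcases Nat.lt_or_ge m m' with hlt | hge
        · -- if m' - m ≤ B then m ∈ T
          rcases le_or_gt (m' - m) B with hle | hgt
          · exact hmT (Set.mem_biUnion (Finset.mem_Icc.mpr ⟨by omega, hle⟩)
              ⟨hmS, (show m + (m' - m) = m' by omega).symm ▸ hm'S⟩)
          · -- m' - m > B, contradicts equal div values
            have : (m' - a) ≥ (m - a) + B + 1 := by omega
            have h2 : (m - a + B + 1) / B ≥ (m - a) / B + 1 := by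
              have h3 : (m - a + B) / B = (m - a) / B + 1 := by
                rw [Nat.add_div_right _ (by omega)]
              calc (m - a + B + 1) / B ≥ (m - a + B) / B := Nat.div_le_div_right (by omega)
                _ = (m - a) / B + 1 := h3
            have h4 : (m' - a) / B ≥ (m - a) / B + 1 :=
              le_trans h2 (Nat.div_le_div_right (by omega))
            simp only at hfm
            omega
        · -- symmetric case m' < m
          have hlt : m' < m := by omega
          rcases le_or_gt (m - m') B with hle | hgt
          · exact hm'T (Set.mem_biUnion (Finset.mem_Icc.mpr ⟨by omega, hle⟩)
              ⟨hm'S, (show m' + (m - m') = m by omega).symm ▸ hmS⟩)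
          · have h2 : (m' - a + B + 1) / B ≥ (m' - a) / B + 1 := by
              have h3 : (m' - a + B) / B = (m' - a) / B + 1 := by
                rw [Nat.add_div_right _ (by omega)]
              calc (m' - a + B + 1) / B ≥ (m' - a + B) / B := Nat.div_le_div_right (by omega)
                _ = (m' - a) / B + 1 := h3
            have h4 : (m - a) / B ≥ (m' - a) / B + 1 :=
              le_trans h2 (Nat.div_le_div_right (by omega))
            simp only at hfm
            omega
      have := Set.ncard_le_ncard_of_injOn (fun m => (m - a) / B) hmaps hinj
        (Set.finite_Iio _)
      have hIio : (Set.Iio (n / B + 1)).ncard = n / B + 1 := by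
        rw [show Set.Iio (n / B + 1) = ↑(Finset.Iio (n / B + 1)) by simp, Set.ncard_coe_finset]
        simp
      omega
    have hsplit : (S ∩ Set.Ico a (a + n)).ncard ≤ (T ∩ Set.Ico a (a + n)).ncard + U.ncard := by
      have hsub : S ∩ Set.Ico a (a + n) ⊆ (T ∩ Set.Ico a (a + n)) ∪ U := by
        intro m hm
        by_cases hmT : m ∈ T
        · exact Or.inl ⟨hmT, hm.2⟩
        · exact Or.inr ⟨hm, hmT⟩
      refine le_trans (Set.ncard_le_ncard hsub ?_) (Set.ncard_union_le _ _)
      exact (window_finite T a n).union ((window_finite S a n).subset diff_subset)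
    -- now the real estimate
    have hBpos : (0 : ℝ) < B := by exact_mod_cast hB1
    have hnpos : (0 : ℝ) < n := by exact_mod_cast hn
    have e1 : ((S ∩ Set.Ico a (a + n)).ncard : ℝ) / n ≤
        ((T ∩ Set.Ico a (a + n)).ncard : ℝ) / n + (U.ncard : ℝ) / n := by
      rw [← add_div]
      refine div_mono_num ?_ n
      exact_mod_cast hsplit
    have e2 : ((T ∩ Set.Ico a (a + n)).ncard : ℝ) / n ≤ rat T n := le_ciSup (bdd T n) a
    have e3 : (U.ncard : ℝ) / n ≤ 1 / B + 1 / n := by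
      have h1 : (U.ncard : ℝ) ≤ (n / B : ℕ) + 1 := by exact_mod_cast hUcard
      have h2 : ((n / B : ℕ) : ℝ) ≤ (n : ℝ) / B := Nat.cast_div_le
      have h3 : (U.ncard : ℝ) / n ≤ ((n : ℝ) / B + 1) / n := by
        refine div_mono_num (le_trans h1 ?_) n
        linarith
      refine le_trans h3 (le_of_eq ?_)
      field_simp
    linarith
  -- derive contradiction
  have hev1 : ∀ᶠ n in atTop, rat T n < ε / 4 :=
    hTnull.eventually_lt_const (by positivity)
  have hev2 : ∀ᶠ n : ℕ in atTop, 1 / (n : ℝ) < ε / 4 := by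
    have : Tendsto (fun n : ℕ => 1 / (n : ℝ)) atTop (nhds 0) := by
      exact tendsto_one_div_atTop_nhds_zero_nat
    exact this.eventually_lt_const (by positivity)
  have hevB : 1 / (B : ℝ) ≤ ε / 4 := by
    rw [div_le_iff₀ (by positivity)] at hBge
    rw [div_le_iff₀ (by exact_mod_cast hB1 : (0:ℝ) < B)]
    -- 1 ≤ ε/4 * B  from 4 ≤ ε * B
    nlinarith
  have hfinal : ∀ᶠ n in atTop, rat S n < ε := by
    filter_upwards [hev1, hev2, eventually_ge_atTop 1] with n h1 h2 h3
    have := key n h3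
    nlinarith
  obtain ⟨n, hn1, hn2⟩ := (hfreq.and_eventually hfinal).exists
  linarith

end BDaux

namespace BDaux

def apSet (p : ℕ × ℕ) : Set ℕ := {m | ∃ n, m = p.1 + n * p.2}

def Good (S : Set ℕ) : Prop :=
  ∃ (F : Finset (ℕ × ℕ)) (Z : Set ℕ), Dnull Z ∧ S = (⋃ p ∈ F, apSet p) ∪ Z

lemma good_of_dnull {S : Set ℕ} (h : Dnull S) : Good S :=
  ⟨∅, S, h, by simp⟩

lemma good_univ : Good (Set.univ : Set ℕ) := by
  refine ⟨{(0, 1)}, ∅, Dnull_finite Set.finite_empty, ?_⟩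
  rw [Set.union_empty]
  ext m
  simp only [Set.mem_univ, Finset.mem_singleton, Set.mem_iUnion, true_iff]
  exact ⟨(0, 1), rfl, ⟨m, by simp [apSet]⟩⟩

lemma good_union {A B : Set ℕ} (hA : Good A) (hB : Good B) : Good (A ∪ B) := by
  obtain ⟨F1, Z1, hZ1, h1⟩ := hA
  obtain ⟨F2, Z2, hZ2, h2⟩ := hB
  refine ⟨F1 ∪ F2, Z1 ∪ Z2, Dnull_union hZ1 hZ2, ?_⟩
  rw [h1, h2]
  ext m
  simp only [Set.mem_union, Set.mem_iUnion, Finset.mem_union]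
  constructor
  · rintro ((⟨p, hp, hm⟩ | hm) | (⟨p, hp, hm⟩ | hm))
    · exact Or.inl ⟨p, Or.inl hp, hm⟩
    · exact Or.inr (Or.inl hm)
    · exact Or.inl ⟨p, Or.inr hp, hm⟩
    · exact Or.inr (Or.inr hm)
  · rintro (⟨p, hp | hp, hm⟩ | (hm | hm))
    · exact Or.inl (Or.inl ⟨p, hp, hm⟩)
    · exact Or.inr (Or.inl ⟨p, hp, hm⟩)
    · exact Or.inl (Or.inr hm)
    · exact Or.inr (Or.inr hm)

lemma good_biUnion {ι : Type*} (F : Finset ι) {A : ι → Set ℕ}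
    (h : ∀ i ∈ F, Good (A i)) : Good (⋃ i ∈ F, A i) := by
  classical
  induction F using Finset.induction_on with
  | empty => simpa using good_of_dnull (Dnull_finite Set.finite_empty)
  | @insert a s hx ih =>
    rw [Finset.set_biUnion_insert]
    exact good_union (h a (Finset.mem_insert_self a s))
      (ih fun i hi => h i (Finset.mem_insert_of_mem hi))

lemma good_affine {A : Set ℕ} (a0 d : ℕ) (hd : 1 ≤ d) (hA : Good A) :
    Good ((fun j => a0 + d * j) '' A) := by
  obtain ⟨F, Z, hZ, hEq⟩ := hA
  classical
  refine ⟨F.image (fun p => (a0 + d * p.1, d * p.2)),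
    (fun j => a0 + d * j) '' Z, Dnull_affine a0 d hd hZ, ?_⟩
  rw [hEq, Set.image_union]
  congr 1
  ext m
  simp only [Set.mem_image, Set.mem_iUnion, Finset.mem_image, apSet, Set.mem_setOf_eq]
  constructor
  · rintro ⟨j, ⟨p, hp, n, rfl⟩, rfl⟩
    exact ⟨(a0 + d * p.1, d * p.2), ⟨p, hp, rfl⟩, n, by ring⟩
  · rintro ⟨q, ⟨p, hp, rfl⟩, n, rfl⟩
    exact ⟨p.1 + n * p.2, ⟨p, hp, n, rfl⟩, by ring⟩

lemma good_shift {S : Set ℕ} (N : ℕ) (h : Good {j | N + j ∈ S}) : Good S := by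
  have h1 : Good ((fun j => N + 1 * j) '' {j | N + j ∈ S}) := good_affine N 1 le_rfl h
  have h2 : Good (S ∩ Set.Iio N) :=
    good_of_dnull (Dnull_finite ((Set.finite_Iio N).subset inter_subset_right))
  have hEq : S = (S ∩ Set.Iio N) ∪ (fun j => N + 1 * j) '' {j | N + j ∈ S} := by
    ext m
    simp only [Set.mem_union, Set.mem_inter_iff, Set.mem_Iio, Set.mem_image, Set.mem_setOf_eq,
      one_mul]
    constructor
    · intro hm
      rcases Nat.lt_or_ge m N with hc | hc
      · exact Or.inl ⟨hm, hc⟩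
      · exact Or.inr ⟨m - N, by rw [show N + (m - N) = m by omega]; exact hm, by omega⟩
    · rintro (⟨hm, _⟩ | ⟨j, hj, rfl⟩)
      · exact hm
      · exact hj
  rw [hEq]
  exact good_union h2 h1

end BDaux

namespace BDaux

open TopologicalSpace

lemma nat_infinite_exists_ge {s : Set ℕ} (h : s.Infinite) (a : ℕ) : ∃ m ∈ s, a ≤ m := by
  by_contra hcon
  push_neg at hcon
  exact h ((Set.finite_Iio a).subset fun m hm => hcon m hm)

lemma iter_orbit {X : Type*} (g : X → X) (y : ℕ → X) (hy : ∀ j, g (y (j + 1)) = y j) :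
    ∀ d m, g^[d] (y (m + d)) = y m := by
  intro d
  induction d with
  | zero => intro m; simp
  | succ d ih =>
    intro m
    rw [Function.iterate_succ_apply]
    have h1 : g (y (m + (d + 1))) = y (m + d) := by
      have := hy (m + d)
      rw [show m + d + 1 = m + (d + 1) by omega] at this
      exact this
    rw [h1]
    exact ih m

lemma closeds_mem_inf {X : Type*} [TopologicalSpace X] {A B : Closeds X} {x : X} :
    x ∈ A ⊓ B ↔ x ∈ A ∧ x ∈ B := by
  rw [← SetLike.mem_coe, Closeds.coe_inf]
  exact Set.mem_inter_iff _ _ _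

lemma stab {X : Type*} [TopologicalSpace X] [NoetherianSpace X] (T : ℕ → Closeds X)
    (hT : Antitone T) : ∃ N₀, ∀ N, N₀ ≤ N → T N = T N₀ := by
  obtain ⟨a, ⟨N₀, ha⟩, hmin⟩ :=
    (wellFounded_lt (α := Closeds X)).has_min (Set.range T) ⟨T 0, ⟨0, rfl⟩⟩
  refine ⟨N₀, fun N hN => ?_⟩
  have hle : T N ≤ T N₀ := hT hN
  by_contra hne
  exact hmin (T N) ⟨N, rfl⟩ (ha ▸ lt_of_le_of_ne hle (by rwa [ha] at hne ⊢ <;> exact hne))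

theorem key {X : Type*} [TopologicalSpace X] [NoetherianSpace X] (Z : Closeds X) :
    ∀ g : X → X, Continuous g → ∀ y : ℕ → X, (∀ j, g (y (j + 1)) = y j) →
      (∀ j, y j ∈ Z) → ∀ Y : Set X, IsClosed Y → Good {j | y j ∈ Y} := by
  refine WellFounded.induction (wellFounded_lt (α := Closeds X))
    (C := fun Z => ∀ g : X → X, Continuous g → ∀ y : ℕ → X, (∀ j, g (y (j + 1)) = y j) →
      (∀ j, y j ∈ Z) → ∀ Y : Set X, IsClosed Y → Good {j | y j ∈ Y}) Z ?_
  clear Z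
  intro Z IH g hg y hy hyZ Y hY
  -- Step 1 : tail closures
  set T : ℕ → Closeds X := fun N => Closeds.closure (y '' Set.Ici N) with hTdef
  have hTanti : Antitone T := by
    intro N M hNM
    show T M ≤ T N
    rw [← SetLike.coe_subset_coe]
    exact closure_mono (Set.image_mono fun m hm => le_trans hNM hm)
  obtain ⟨N₀, hstab⟩ := stab T hTanti
  have hTZ : ∀ N, T N ≤ Z := by
    intro N
    rw [← SetLike.coe_subset_coe]
    exact closure_minimal (fun z => by rintro ⟨m, _, rfl⟩; exact hyZ m) Z.isClosed
  rcases lt_or_eq_of_le (hTZ N₀) with hlt | heq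
  · -- tail closure is a proper closed subset : use the inductive hypothesis with shifted orbit
    have hG : Good {j | y (N₀ + j) ∈ Y} := by
      refine IH (T N₀) hlt g hg (fun j => y (N₀ + j)) (fun j => ?_) (fun j => ?_) Y hY
      · have := hy (N₀ + j)
        rw [show N₀ + j + 1 = N₀ + (j + 1) by omega] at this
        exact this
      · exact subset_closure ⟨N₀ + j, Set.mem_Ici.mpr (Nat.le_add_right _ _), rfl⟩
    exact good_shift N₀ hG
  · -- all tails are dense in Z
    have hdense : ∀ N, closure (y '' Set.Ici N) = (Z : Set X) := by
      intro N
      apply subset_antisymm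
      · exact SetLike.coe_subset_coe.mpr (hTZ N)
      · rcases le_or_gt N₀ N with h | h
        · have h2 : (T N : Set X) = (Z : Set X) := by rw [hstab N h, heq]
          exact h2.symm.subset
        · have hsub : (T N₀ : Set X) ⊆ closure (y '' Set.Ici N) :=
            closure_mono (Set.image_mono fun m hm => le_trans h.le hm)
          calc (Z : Set X) = (T N₀ : Set X) := by rw [heq]
            _ ⊆ closure (y '' Set.Ici N) := hsub
    by_cases hZY : (Z : Set X) ⊆ Y
    · -- the whole orbit is in Y
      have : {j | y j ∈ Y} = Set.univ := by
        ext j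
        simp only [Set.mem_setOf_eq, Set.mem_univ, iff_true]
        exact hZY (hyZ j)
      rw [this]
      exact good_univ
    by_cases hnull : Dnull {j | y j ∈ Y}
    · exact good_of_dnull hnull
    -- positive density case
    have hpos : Dpos {j | y j ∈ Y} := hnull
    -- the family of closed subsets of Y meeting the orbit with positive density
    set 𝒞 : Set (Closeds X) := {C | (C : Set X) ⊆ Y ∧ Dpos {j | y j ∈ C}} with h𝒞
    have hC₀ : (Z ⊓ ⟨Y, hY⟩) ∈ 𝒞 := by
      constructor
      · rw [Closeds.coe_inf]
        exact Set.inter_subset_right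
      · have : {j | y j ∈ Z ⊓ ⟨Y, hY⟩} = {j | y j ∈ Y} := by
          ext j
          simp only [Set.mem_setOf_eq, closeds_mem_inf]
          exact ⟨fun h => h.2, fun h => ⟨hyZ j, h⟩⟩
        rw [this]
        exact hpos
    obtain ⟨C, hC, hminC⟩ :=
      (wellFounded_lt (α := Closeds X)).has_min 𝒞 ⟨_, hC₀⟩
    obtain ⟨d, hd1, hdpos⟩ := gaps hC.2
    have hd0 : 0 < d := hd1
    -- C is invariant under g^[d]
    have hCinv : ∀ z, z ∈ C → g^[d] z ∈ C := by
      set C' : Closeds X := C ⊓ ⟨g^[d] ⁻¹' C, C.isClosed.preimage (hg.iterate d)⟩ with hC'def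
      have hsub : (· + d) '' {m | m ∈ {j | y j ∈ C} ∧ m + d ∈ {j | y j ∈ C}} ⊆
          {j | y j ∈ C'} := by
        rintro k ⟨m, ⟨hm1, hm2⟩, rfl⟩
        refine closeds_mem_inf.mpr ⟨hm2, ?_⟩
        show y (m + d) ∈ g^[d] ⁻¹' C
        rw [Set.mem_preimage, iter_orbit g y hy d m]
        exact hm1
      have hC' : C' ∈ 𝒞 := by
        constructor
        · rw [Closeds.coe_inf]
          exact fun z hz => hC.1 hz.1
        · intro hnull'
          exact (Dpos_shift d hdpos) (Dnull_mono hsub hnull')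
      have hEq : C' = C := by
        by_contra hne
        exact hminC C' hC' (lt_of_le_of_ne inf_le_left hne)
      intro z hz
      rw [← hEq] at hz
      have := (closeds_mem_inf.mp hz).2
      exact this
    have hMdown : ∀ m, y (m + d) ∈ C → y m ∈ C := by
      intro m hm
      rw [← iter_orbit g y hy d m]
      exact hCinv _ hm
    -- find a residue class fully inside C
    have hMinf : {j | y j ∈ C}.Infinite := by
      by_contra hfin
      rw [Set.not_infinite] at hfin
      exact hC.2 (Dnull_finite hfin)
    have hres : ∃ r, r < d ∧ {m | y m ∈ C ∧ m % d = r}.Infinite := by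
      by_contra hcon
      push_neg at hcon
      have : {j | y j ∈ C} ⊆ ⋃ r ∈ Finset.range d, {m | y m ∈ C ∧ m % d = r} := by
        intro m hm
        exact Set.mem_biUnion (Finset.mem_range.mpr (Nat.mod_lt m hd0)) ⟨hm, rfl⟩
      refine hMinf (Set.Finite.subset ?_ this)
      refine Set.Finite.biUnion (Finset.range d).finite_toSet fun r hr => ?_
      rcases Set.finite_or_infinite {m | y m ∈ C ∧ m % d = r} with h | h
      · exact h
      · exact absurd h (Set.not_infinite.mpr (hcon r (by simpa using hr)))
    obtain ⟨r, hrd, hrinf⟩ := hres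
    have hdesc : ∀ t j, y (r + (j + t) * d) ∈ C → y (r + j * d) ∈ C := by
      intro t
      induction t with
      | zero => intro j h; simpa using h
      | succ t ih =>
        intro j h
        refine ih j ?_
        have he : r + (j + (t + 1)) * d = (r + (j + t) * d) + d := by
          rw [show j + (t + 1) = (j + t) + 1 by omega, Nat.succ_mul]
          omega
        rw [he] at h
        exact hMdown _ h
    have hfull : ∀ j, y (r + j * d) ∈ C := by
      intro j
      obtain ⟨m, ⟨hmC, hmr⟩, hmge⟩ := nat_infinite_exists_ge hrinf (r + j * d)
      set q := m / d with hq
      have hm_eq : m = r + q * d := by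
        have h1 : d * q + m % d = m := Nat.div_add_mod m d
        have h2 : d * q = q * d := Nat.mul_comm _ _
        omega
      have hqj : j ≤ q := by
        by_contra hqj
        push_neg at hqj
        have : q * d < j * d := (Nat.mul_lt_mul_right hd0).mpr (by omega)
        omega
      have := hdesc (q - j) j (by rw [show j + (q - j) = q by omega, ← hm_eq]; exact hmC)
      exact this
    -- subsampled orbits and their stable tail closures
    set w : ℕ → ℕ → X := fun r' j => y (r' + j * d) with hwdef
    set T2 : ℕ → ℕ → Closeds X := fun r' N => Closeds.closure (w r' '' Set.Ici N) with hT2def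
    have hT2anti : ∀ r', Antitone (T2 r') := by
      intro r' N M hNM
      show T2 r' M ≤ T2 r' N
      rw [← SetLike.coe_subset_coe]
      exact closure_mono (Set.image_mono fun m hm => le_trans hNM hm)
    choose N₁ hN₁ using fun r' => stab (T2 r') (hT2anti r')
    set V : ℕ → Closeds X := fun r' => T2 r' (N₁ r') with hVdef
    have hVcoe : ∀ r', (V r' : Set X) = closure (w r' '' Set.Ici (N₁ r')) := fun r' => rfl
    have hVZ : ∀ r', V r' ≤ Z := by
      intro r'
      rw [← SetLike.coe_subset_coe, hVcoe]
      exact closure_minimal (fun z => by rintro ⟨m, _, rfl⟩; exact hyZ _) Z.isClosed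
    have hVC : V r ≤ C := by
      rw [← SetLike.coe_subset_coe, hVcoe]
      refine closure_minimal (fun z => ?_) C.isClosed
      rintro ⟨m, _, rfl⟩
      exact hfull m
    -- g maps V (r'+1) into V r'
    have hgV : ∀ r', g '' (V (r' + 1) : Set X) ⊆ (V r' : Set X) := by
      intro r'
      set N := max (N₁ r') (N₁ (r' + 1)) with hN
      have e1 : T2 (r' + 1) N = V (r' + 1) := hN₁ (r' + 1) N (le_max_right _ _)
      have e2 : T2 r' N = V r' := hN₁ r' N (le_max_left _ _)
      have hcomp : ∀ j, g (w (r' + 1) j) = w r' j := by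
        intro j
        have := hy (r' + j * d)
        rw [show r' + j * d + 1 = r' + 1 + j * d by omega] at this
        exact this
      calc g '' (V (r' + 1) : Set X) = g '' (T2 (r' + 1) N : Set X) := by rw [e1]
        _ ⊆ closure (g '' (w (r' + 1) '' Set.Ici N)) :=
            image_closure_subset_closure_image hg
        _ = closure (w r' '' Set.Ici N) := by
            rw [← Set.image_comp]
            exact congrArg closure (Set.image_congr fun j _ => hcomp j)
        _ = (V r' : Set X) := by rw [← e2]; rfl
    -- periodicity of V
    have hVper : ∀ r', V (r' + d) = V r' := by
      intro r'
      have him : ∀ N, w (r' + d) '' Set.Ici N = w r' '' Set.Ici (N + 1) := by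
        intro N
        ext z
        constructor
        · rintro ⟨j, hj, rfl⟩
          refine ⟨j + 1, by simp only [Set.mem_Ici] at hj ⊢; omega, ?_⟩
          show y (r' + (j + 1) * d) = y (r' + d + j * d)
          rw [Nat.succ_mul]
          congr 1
          omega
        · rintro ⟨j, hj, rfl⟩
          simp only [Set.mem_Ici] at hj
          refine ⟨j - 1, by simp only [Set.mem_Ici]; omega, ?_⟩
          show y (r' + d + (j - 1) * d) = y (r' + j * d)
          congr 1
          have h5 : (j - 1) * d = j * d - 1 * d := by rw [← tsub_mul]
          have h6 : 1 * d ≤ j * d := Nat.mul_le_mul_right d (by omega : 1 ≤ j)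
          omega
      have hT2eq : ∀ N, T2 (r' + d) N = T2 r' (N + 1) := by
        intro N
        apply Closeds.ext
        show closure (w (r' + d) '' Set.Ici N) = closure (w r' '' Set.Ici (N + 1))
        rw [him N]
      set N := max (N₁ (r' + d)) (N₁ r') with hN
      calc V (r' + d) = T2 (r' + d) N := (hN₁ (r' + d) N (le_max_left _ _)).symm
        _ = T2 r' (N + 1) := hT2eq N
        _ = V r' := hN₁ r' (N + 1) (le_trans (le_max_right _ _) (Nat.le_succ _))
    -- if some V equals Z we reach a contradiction
    have hgZ : (Z : Set X) ⊆ closure (g '' (Z : Set X)) := by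
      have h1 : y '' Set.Ici 0 ⊆ g '' (Z : Set X) := by
        rintro z ⟨m, _, rfl⟩
        exact ⟨y (m + 1), hyZ (m + 1), hy m⟩
      calc (Z : Set X) = closure (y '' Set.Ici 0) := (hdense 0).symm
        _ ⊆ closure (g '' (Z : Set X)) := closure_mono h1
    have hdown : ∀ r', V (r' + 1) = Z → V r' = Z := by
      intro r' hVZ'
      refine le_antisymm (hVZ r') ?_
      rw [← SetLike.coe_subset_coe]
      have h1 : g '' (Z : Set X) ⊆ (V r' : Set X) := by
        rw [← hVZ']
        exact hgV r'
      calc (Z : Set X) ⊆ closure (g '' (Z : Set X)) := hgZ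
        _ ⊆ closure (V r' : Set X) := closure_mono h1
        _ = (V r' : Set X) := (V r').isClosed.closure_eq
    have hdownk : ∀ k r', V (r' + k) = Z → V r' = Z := by
      intro k
      induction k with
      | zero => intro r' h; simpa using h
      | succ k ih =>
        intro r' h
        refine hdown r' (ih (r' + 1) ?_)
        rw [show r' + 1 + k = r' + (k + 1) by omega]
        exact h
    have hcontra : ∀ r₀, V r₀ = Z → False := by
      intro r₀ hr₀
      have hup : ∀ t, V (r₀ + t * d) = Z := by
        intro t
        induction t with
        | zero => simpa using hr₀
        | succ t ih =>
          rw [show r₀ + (t + 1) * d = (r₀ + t * d) + d by rw [Nat.succ_mul]; omega, hVper]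
          exact ih
      have hrZ : V r = Z := by
        have h1 : r ≤ r₀ + r * d := by
          have := Nat.le_mul_of_pos_right r hd0
          omega
        have h2 := hup r
        refine hdownk (r₀ + r * d - r) r ?_
        rw [show r + (r₀ + r * d - r) = r₀ + r * d by omega]
        exact h2
      have : (Z : Set X) ⊆ Y := by
        calc (Z : Set X) = (V r : Set X) := by rw [hrZ]
          _ ⊆ (C : Set X) := SetLike.coe_subset_coe.mpr hVC
          _ ⊆ Y := hC.1
      exact hZY this
    have hVlt : ∀ r', V r' < Z := fun r' =>
      lt_of_le_of_ne (hVZ r') (fun h => absurd h (hcontra r'))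
    -- apply the inductive hypothesis to each residue class
    have hGr : ∀ r', Good {j | y (r' + (N₁ r' + j) * d) ∈ Y} := by
      intro r'
      refine IH (V r') (hVlt r') (g^[d]) (hg.iterate d)
        (fun j => y (r' + (N₁ r' + j) * d)) (fun j => ?_) (fun j => ?_) Y hY
      · have he : r' + (N₁ r' + (j + 1)) * d = (r' + (N₁ r' + j) * d) + d := by
          rw [show N₁ r' + (j + 1) = (N₁ r' + j) + 1 by omega, Nat.succ_mul]
          omega
        show g^[d] (y (r' + (N₁ r' + (j + 1)) * d)) = y (r' + (N₁ r' + j) * d)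
        rw [he]
        exact iter_orbit g y hy d _
      · show y (r' + (N₁ r' + j) * d) ∈ V r'
        rw [← SetLike.mem_coe, hVcoe]
        exact subset_closure ⟨N₁ r' + j, Set.mem_Ici.mpr (Nat.le_add_right _ _), rfl⟩
    -- reassemble
    set bmax := (Finset.range d).sup (fun r' => r' + N₁ r' * d) with hbmax
    have hSeq : {j | y j ∈ Y} =
        ({j | y j ∈ Y} ∩ Set.Iio bmax) ∪
          ⋃ r' ∈ Finset.range d, (fun j => (r' + N₁ r' * d) + d * j) ''
            {j | y (r' + (N₁ r' + j) * d) ∈ Y} := by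
      ext m
      simp only [Set.mem_union, Set.mem_inter_iff, Set.mem_Iio, Set.mem_iUnion, Set.mem_image,
        Set.mem_setOf_eq, Finset.mem_range]
      constructor
      · intro hm
        set r' := m % d with hr'
        set q := m / d with hq
        have hr'd : r' < d := Nat.mod_lt m hd0
        have hm_eq : m = r' + q * d := by
          have h1 : d * q + m % d = m := Nat.div_add_mod m d
          have h2 : d * q = q * d := Nat.mul_comm _ _
          omega
        rcases Nat.lt_or_ge q (N₁ r') with hc | hc
        · left
          refine ⟨hm, ?_⟩
          have h3 : q * d < N₁ r' * d := (Nat.mul_lt_mul_right hd0).mpr hc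
          have h4 : r' + N₁ r' * d ≤ bmax :=
            Finset.le_sup (f := fun r' => r' + N₁ r' * d) (Finset.mem_range.mpr hr'd)
          omega
        · right
          refine ⟨r', hr'd, q - N₁ r', ?_, ?_⟩
          · have he : r' + (N₁ r' + (q - N₁ r')) * d = m := by
              rw [show N₁ r' + (q - N₁ r') = q by omega]
              omega
            rw [he]
            exact hm
          · have h5 : (N₁ r' + (q - N₁ r')) * d = N₁ r' * d + (q - N₁ r') * d :=
              Nat.add_mul _ _ _
            have h6 : d * (q - N₁ r') = (q - N₁ r') * d := Nat.mul_comm _ _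
            have h7 : (N₁ r' + (q - N₁ r')) * d = q * d := by
              rw [show N₁ r' + (q - N₁ r') = q by omega]
            omega
      · rintro (⟨hm, _⟩ | ⟨r', hr'd, j, hj, rfl⟩)
        · exact hm
        · have he : r' + N₁ r' * d + d * j = r' + (N₁ r' + j) * d := by
            have h5 : (N₁ r' + j) * d = N₁ r' * d + j * d := Nat.add_mul _ _ _
            have h6 : d * j = j * d := Nat.mul_comm _ _
            omega
          rw [he]
          exact hj
    rw [hSeq]
    refine good_union ?_ ?_
    · exact good_of_dnull (Dnull_finite ((Set.finite_Iio bmax).subset Set.inter_subset_right))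
    · refine good_biUnion _ fun r' hr' => ?_
      exact good_affine (r' + N₁ r' * d) d hd1 (hGr r')

end BDaux

theorem stmt_11 {X : Type*} [TopologicalSpace X] [TopologicalSpace.NoetherianSpace X]
    (f : X → X) (hf : Continuous f) (x : X) (o : ℕ → X)
    (ho0 : o 0 = x) (ho : ∀ n : ℕ, f (o (n + 1)) = o n)
    (Y : Set X) (hY : IsClosed Y) :
    ∃ (F : Finset (ℕ × ℕ)) (Z : Set ℕ), banachDensity Z = 0 ∧
      {n : ℕ | o n ∈ Y} =
        (⋃ p ∈ F, {m : ℕ | ∃ n : ℕ, m = p.1 + n * p.2}) ∪ Z := by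
  have hall : ∀ j : ℕ, o j ∈ (⊤ : TopologicalSpace.Closeds X) := by
    intro j
    rw [← SetLike.mem_coe, TopologicalSpace.Closeds.coe_top]
    trivial
  obtain ⟨F, Zs, hZs, hSeq⟩ := BDaux.key (⊤ : TopologicalSpace.Closeds X) f hf o ho hall Y hY
  refine ⟨F, Zs, BDaux.banachDensity_eq_zero hZs, ?_⟩
  simp only [BDaux.apSet] at hSeq
  exact hSeq
end
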